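/- The iterated real integral \int_0^1 \int_{1-x_2}^{1} \frac{dx_1\,dx_2}{x_1 x_2} = \zeta(2) = \pi^2/6. Equivalently, \int_0^1 \frac{-\log(1-x_2)}{x_2}\, dx_2 = \pi^2/6. -/

import Mathlib

open Real

section Aux

open MeasureTheory intervalIntegral

private lemma hs2' : HasSum (fun n : ℕ => (1 : ℝ) / ((n : ℝ) + 1) ^ 2) (π ^ 2 / 6) := by
  have h2 := (hasSum_nat_add_iff (f := fun n : ℕ => (1 : ℝ) / (n : ℝ) ^ 2)
      (g := π ^ 2 / 6) 1).mpr (by simpa using hasSum_zeta_two)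
  simpa using h2

private lemma ptwise' {x : ℝ} (hx : x ∈ Set.Ioc (0:ℝ) 1) :
    -Real.log (1 - x) / x = ∑' n : ℕ, x ^ n / ((n : ℝ) + 1) := by
  rcases eq_or_lt_of_le hx.2 with h1 | h1
  · subst h1
    rw [tsum_eq_zero_of_not_summable, sub_self, Real.log_zero, neg_zero, zero_div]
    intro hsum
    simp only [one_pow] at hsum
    have : Summable (fun n : ℕ => 1 / (n : ℝ)) := by
      rw [← summable_nat_add_iff 1]
      simpa using hsum
    exact Real.not_summable_one_div_natCast this
  · have hab : |x| < 1 := by rw [abs_of_pos hx.1]; exact h1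
    have h := hasSum_pow_div_log_of_abs_lt_one hab
    have h' : HasSum (fun n : ℕ => x ^ n / ((n : ℝ) + 1)) (-Real.log (1 - x) / x) := by
      have := h.div_const x
      convert this using 2 with n
      · rfl
      rw [div_right_comm, pow_succ, mul_div_cancel_right₀ _ hx.1.ne']
    exact h'.tsum_eq.symm

private lemma In' (n : ℕ) :
    ∫ x in Set.Ioc (0:ℝ) 1, x ^ n / ((n : ℝ) + 1) = 1 / ((n : ℝ) + 1) ^ 2 := by
  rw [← intervalIntegral.integral_of_le zero_le_one, intervalIntegral.integral_div,
    integral_pow]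
  rw [one_pow, zero_pow (by positivity), sub_zero, div_div, sq]

private lemma Fint' (n : ℕ) :
    IntegrableOn (fun x : ℝ => x ^ n / ((n : ℝ) + 1)) (Set.Ioc 0 1) :=
  (Continuous.integrableOn_Ioc (by continuity))

private lemma key' : (∫ x in (0:ℝ)..1, -Real.log (1 - x) / x) = π ^ 2 / 6 := by
  rw [intervalIntegral.integral_of_le zero_le_one,
    setIntegral_congr_fun measurableSet_Ioc (fun x hx => ptwise' hx),
    ← integral_tsum_of_summable_integral_norm Fint' ?_]
  · rw [show (fun n : ℕ => ∫ x in Set.Ioc (0:ℝ) 1, x ^ n / ((n:ℝ)+1)) =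
      (fun n : ℕ => (1:ℝ) / ((n:ℝ)+1)^2) from funext In']
    exact hs2'.tsum_eq
  · have : ∀ n : ℕ, (∫ x in Set.Ioc (0:ℝ) 1, ‖x ^ n / ((n:ℝ)+1)‖) = 1 / ((n:ℝ)+1)^2 := by
      intro n
      rw [← In' n]
      refine setIntegral_congr_fun measurableSet_Ioc (fun x hx => ?_)
      exact Real.norm_of_nonneg (div_nonneg (pow_nonneg hx.1.le n) (by positivity))
    rw [funext this]
    exact hs2'.summable

end Aux

/-- `∫₀¹ ∫_{1-x₂}^1 dx₁ dx₂/(x₁x₂) = ζ(2) = π²/6`; equivalently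
`∫₀¹ (-log(1-x₂)/x₂) dx₂ = π²/6`. -/
theorem v0_of_V10 :
    (∫ x₂ in (0 : ℝ)..1, ∫ x₁ in (1 - x₂)..1, 1 / (x₁ * x₂)) = π ^ 2 / 6 ∧
      (∫ x₂ in (0 : ℝ)..1, -Real.log (1 - x₂) / x₂) = π ^ 2 / 6 := by
  refine ⟨?_, key'⟩
  refine Eq.trans ?_ key'
  apply intervalIntegral.integral_congr_ae
  have h1 : ∀ᵐ x : ℝ, x ≠ 1 := by
    have hs : {x : ℝ | ¬ x ≠ 1} = {1} := by ext y; simp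
    rw [MeasureTheory.ae_iff, hs]
    exact MeasureTheory.measure_singleton 1
  filter_upwards [h1] with x hx1 hx
  rw [Set.uIoc_of_le zero_le_one] at hx
  have hx0 : 0 < x := hx.1
  have hxlt : x < 1 := lt_of_le_of_ne hx.2 hx1
  have h1x : 0 < 1 - x := by linarith
  simp_rw [show ∀ t : ℝ, 1 / (t * x) = (1 / x) * (1 / t) from fun t => by
    rw [div_mul_div_comm, one_mul, mul_comm]]
  rw [intervalIntegral.integral_const_mul,
    integral_one_div (Set.notMem_uIcc_of_lt h1x one_pos)]
  rw [one_div (1 - x), Real.log_inv]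
  ring
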